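/- arXiv:2507.04485 — 6 statements merged into one kernel-verified Lean document; each statement's English description precedes it below -/
import Mathlib

section
/- Let π be an n-profile with optimal two-facility cost C = OPT(π). Define h₁ as the unique x ≥ π₁ with Σᵢ max(0, x − πᵢ) = C and h₂ as the unique x ≤ πₙ with Σᵢ max(0, πᵢ − x) = C, and set g₁ = min(h₁, mean(π)), g₂ = max(h₂, mean(π)). Then g₁ = mean(π) if and only if g₂ = mean(π). -/
noncomputable def cost1 {n : ℕ} (π : Fin n → ℝ) (a b : ℝ) : ℝ :=
  ∑ i, min |π i - a| |π i - b|

theorem stmt5 {n : ℕ} (hn : 2 ≤ n) (π : Fin n → ℝ) (hπ : Monotone π) (C : ℝ)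
    (hC : IsLeast {c : ℝ | ∃ a b : ℝ, a ≤ b ∧ cost1 π a b = c} C)
    (h1 h2 : ℝ)
    (hh1 : π ⟨0, by omega⟩ ≤ h1 ∧ (∑ i, max 0 (h1 - π i)) = C)
    (hh2 : h2 ≤ π ⟨n - 1, by omega⟩ ∧ (∑ i, max 0 (π i - h2)) = C) :
    (min h1 ((∑ i, π i) / n) = (∑ i, π i) / n ↔
     max h2 ((∑ i, π i) / n) = (∑ i, π i) / n) := by
  obtain ⟨h1ge, h1eq⟩ := hh1
  obtain ⟨h2le, h2eq⟩ := hh2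
  set m : ℝ := (∑ i, π i) / n with hm
  have hn0 : (n : ℝ) ≠ 0 := by
    have : (0:ℝ) < n := by exact_mod_cast Nat.lt_of_lt_of_le (by norm_num) hn
    linarith
  have key : (∑ i, max 0 (m - π i)) = ∑ i, max 0 (π i - m) := by
    have hd : (∑ i, (max 0 (m - π i) - max 0 (π i - m))) = ∑ i, (m - π i) := by
      apply Finset.sum_congr rfl; intro i _
      rcases le_total (π i) m with h | h
      · rw [max_eq_right (by linarith), max_eq_left (by linarith)]; ring
      · rw [max_eq_left (by linarith), max_eq_right (by linarith)]; ring
    have hs : (∑ i : Fin n, (m - π i)) = 0 := by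
      rw [Finset.sum_sub_distrib, Finset.sum_const, Finset.card_univ, Fintype.card_fin,
        nsmul_eq_mul, hm]
      field_simp
      ring
    rw [Finset.sum_sub_distrib, hs] at hd
    linarith
  rw [min_eq_right_iff, max_eq_right_iff]
  constructor
  · intro hmh1
    by_contra hc
    push_neg at hc
    have hflt : (∑ i, max 0 (m - π i)) ≤ C := by
      rw [← h1eq]
      apply Finset.sum_le_sum
      intro i _
      exact max_le_max le_rfl (by linarith)
    have hglt : C < ∑ i, max 0 (π i - m) := by
      rw [← h2eq]
      apply Finset.sum_lt_sum
      · intro i _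
        exact max_le_max le_rfl (by linarith)
      · refine ⟨⟨n - 1, by omega⟩, Finset.mem_univ _, ?_⟩
        rw [max_eq_right (by linarith), max_eq_right (by linarith)]
        linarith
    rw [key] at hflt
    linarith
  · intro hh2m
    by_contra hc
    push_neg at hc
    have hglt : (∑ i, max 0 (π i - m)) ≤ C := by
      rw [← h2eq]
      apply Finset.sum_le_sum
      intro i _
      exact max_le_max le_rfl (by linarith)
    have hflt : C < ∑ i, max 0 (m - π i) := by
      rw [← h1eq]
      apply Finset.sum_lt_sum
      · intro i _
        exact max_le_max le_rfl (by linarith)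
      · refine ⟨⟨0, by omega⟩, Finset.mem_univ _, ?_⟩
        rw [max_eq_right (by linarith), max_eq_right (by linarith)]
        linarith
    rw [key] at hflt
    linarith
end

section
/- Mechanism M₃ is 3-approximate: for any n-profile π, letting σ = (σ₁, σ₂) be the lexicographically first optimal 1-D solution with served counts s₁ = |S₁|, s₂ = |S₂|, the 2-D solution τ with τ_ℓ = (σ_ℓ, OPT(π)/s_ℓ) satisfies cost(π, τ) ≤ 3·OPT(π). (If π is trivial, τ₂ has second coordinate 0.) -/
open scoped Classical

noncomputable def dpt (x : ℝ) (p : ℝ × ℝ) : ℝ := |x - p.1| + |p.2|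

noncomputable def dsol (x : ℝ) (τ : (ℝ × ℝ) × (ℝ × ℝ)) : ℝ :=
  min (dpt x τ.1) (dpt x τ.2)

noncomputable def cost {n : ℕ} (π : Fin n → ℝ) (τ : (ℝ × ℝ) × (ℝ × ℝ)) : ℝ :=
  ∑ i, dsol (π i) τ

def lexLE (p q : ℝ × ℝ) : Prop := p.1 < q.1 ∨ (p.1 = q.1 ∧ p.2 ≤ q.2)

def LexOpt {n : ℕ} (π : Fin n → ℝ) (σ : ℝ × ℝ) : Prop :=
  σ.1 ≤ σ.2 ∧ (∀ a b : ℝ, a ≤ b → cost1 π σ.1 σ.2 ≤ cost1 π a b) ∧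
  (∀ a b : ℝ, a ≤ b → cost1 π a b = cost1 π σ.1 σ.2 → lexLE σ (a, b))

theorem stmt12 {n : ℕ} (hn : 1 ≤ n) (π : Fin n → ℝ) (hπ : Monotone π)
    (C : ℝ) (hC : IsLeast {c : ℝ | ∃ a b : ℝ, a ≤ b ∧ cost1 π a b = c} C)
    (σ : ℝ × ℝ)
    (hσnt : (∃ i j, π i ≠ π j) → LexOpt π σ)
    (hσt : (∀ i j, π i = π j) →
      σ = (π ⟨(n - 1) / 2, by omega⟩, π ⟨(n - 1) / 2, by omega⟩))
    (s1 s2 : ℕ)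
    (hs1 : s1 = (Finset.univ.filter (fun i : Fin n => |π i - σ.1| ≤ |π i - σ.2|)).card)
    (hs2 : s2 = n - s1) :
    cost π ((σ.1, C / (s1 : ℝ)), (σ.2, C / (s2 : ℝ))) ≤ 3 * C := by
  classical
  obtain ⟨⟨a, b, hab, habC⟩, hlb⟩ := hC
  have hC0 : 0 ≤ C := by
    rw [← habC]
    exact Finset.sum_nonneg fun i _ => le_min (abs_nonneg _) (abs_nonneg _)
  -- cost1 at σ equals C
  have hσC : cost1 π σ.1 σ.2 = C := by
    by_cases h : ∀ i j, π i = π j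
    · have hσ := hσt h
      have hzero : cost1 π σ.1 σ.2 = 0 := by
        rw [hσ]
        simp only [cost1]
        apply Finset.sum_eq_zero
        intro i _
        have : π i = π ⟨(n - 1) / 2, by omega⟩ := h i _
        simp [this]
      have hCle : C ≤ 0 := by
        have := hlb ⟨σ.1, σ.2, by rw [hσ], hzero⟩
        exact this
      linarith
    · push_neg at h
      obtain ⟨i, j, hij⟩ := h
      obtain ⟨h12, hmin, _⟩ := hσnt ⟨i, j, hij⟩
      have h1 : cost1 π σ.1 σ.2 ≤ C := habC ▸ hmin a b hab
      have h2 : C ≤ cost1 π σ.1 σ.2 := hlb ⟨σ.1, σ.2, h12, rfl⟩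
      linarith
  set S : Finset (Fin n) :=
    Finset.univ.filter (fun i : Fin n => |π i - σ.1| ≤ |π i - σ.2|) with hS
  have hcard2 : (Sᶜ).card = s2 := by
    rw [Finset.card_compl, hs2, hs1]
    simp
  have hd1 : (0:ℝ) ≤ C / (s1 : ℝ) := div_nonneg hC0 (Nat.cast_nonneg _)
  have hd2 : (0:ℝ) ≤ C / (s2 : ℝ) := div_nonneg hC0 (Nat.cast_nonneg _)
  have key : ∀ i : Fin n,
      dsol (π i) ((σ.1, C / (s1 : ℝ)), (σ.2, C / (s2 : ℝ)))
        ≤ min |π i - σ.1| |π i - σ.2|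
          + (if i ∈ S then C / (s1 : ℝ) else C / (s2 : ℝ)) := by
    intro i
    by_cases hi : i ∈ S
    · have hle : |π i - σ.1| ≤ |π i - σ.2| := by
        simpa [hS] using hi
      calc dsol (π i) ((σ.1, C / (s1 : ℝ)), (σ.2, C / (s2 : ℝ)))
          ≤ dpt (π i) (σ.1, C / (s1 : ℝ)) := min_le_left _ _
        _ = |π i - σ.1| + C / (s1 : ℝ) := by
            simp [dpt, abs_of_nonneg hd1]
        _ = min |π i - σ.1| |π i - σ.2| + (if i ∈ S then C / (s1:ℝ) else C / (s2:ℝ)) := by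
            rw [min_eq_left hle, if_pos hi]
    · have hlt : |π i - σ.2| ≤ |π i - σ.1| := by
        have : ¬ |π i - σ.1| ≤ |π i - σ.2| := by simpa [hS] using hi
        linarith [not_le.mp this]
      calc dsol (π i) ((σ.1, C / (s1 : ℝ)), (σ.2, C / (s2 : ℝ)))
          ≤ dpt (π i) (σ.2, C / (s2 : ℝ)) := min_le_right _ _
        _ = |π i - σ.2| + C / (s2 : ℝ) := by
            simp [dpt, abs_of_nonneg hd2]
        _ = min |π i - σ.1| |π i - σ.2| + (if i ∈ S then C / (s1:ℝ) else C / (s2:ℝ)) := by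
            rw [min_eq_right hlt, if_neg hi]
  have hsum : cost π ((σ.1, C / (s1 : ℝ)), (σ.2, C / (s2 : ℝ)))
      ≤ cost1 π σ.1 σ.2
        + ∑ i : Fin n, (if i ∈ S then C / (s1 : ℝ) else C / (s2 : ℝ)) := by
    rw [cost1, ← Finset.sum_add_distrib]
    exact Finset.sum_le_sum fun i _ => key i
  have hite : ∑ i : Fin n, (if i ∈ S then C / (s1 : ℝ) else C / (s2 : ℝ))
      = (s1 : ℝ) * (C / (s1 : ℝ)) + (s2 : ℝ) * (C / (s2 : ℝ)) := by
    rw [Finset.sum_ite, Finset.sum_const, Finset.sum_const, nsmul_eq_mul, nsmul_eq_mul]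
    have e1 : (Finset.univ.filter (· ∈ S)).card = s1 := by
      rw [Finset.filter_mem_eq_inter, Finset.univ_inter, hs1]
    have e2 : (Finset.univ.filter (fun i => i ∉ S)).card = s2 := by
      have he : Finset.univ.filter (fun i => i ∉ S) = Sᶜ := by
        ext i; simp
      rw [he, hcard2]
    rw [e1, e2]
  have h1 : (s1 : ℝ) * (C / (s1 : ℝ)) ≤ C := by
    rcases Nat.eq_zero_or_pos s1 with h | h
    · simp [h, hC0]
    · have hne : (s1 : ℝ) ≠ 0 := Nat.cast_ne_zero.mpr h.ne'
      rw [mul_comm, div_mul_cancel₀ C hne]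
  have h2 : (s2 : ℝ) * (C / (s2 : ℝ)) ≤ C := by
    rcases Nat.eq_zero_or_pos s2 with h | h
    · simp [h, hC0]
    · have hne : (s2 : ℝ) ≠ 0 := Nat.cast_ne_zero.mpr h.ne'
      rw [mul_comm, div_mul_cancel₀ C hne]
  rw [hite] at hsum
  linarith
end

section
/- Let p, q ∈ ℝ² with p₂ > 0 and q₂ > 0, and let z ≥ 0 satisfy |p₁ − q₁| ≤ z. Then for every real x: min(1, p₂/(q₂ + z)) ≤ d(x, p)/d(x, q) ≤ max(1, (p₂ + z)/q₂), where d(x, r) = |x − r₁| + |r₂|. -/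
theorem stmt14 (p q : ℝ × ℝ) (hp : 0 < p.2) (hq : 0 < q.2)
    (z : ℝ) (hz : 0 ≤ z) (hpq : |p.1 - q.1| ≤ z) (x : ℝ) :
    min 1 (p.2 / (q.2 + z)) ≤ dpt x p / dpt x q ∧
    dpt x p / dpt x q ≤ max 1 ((p.2 + z) / q.2) := by
  have hu : (0:ℝ) ≤ |x - p.1| := abs_nonneg _
  have hv : (0:ℝ) ≤ |x - q.1| := abs_nonneg _
  have h1 : |x - p.1| ≤ |x - q.1| + z := by
    have := abs_sub_le x q.1 p.1
    have h2 : |q.1 - p.1| ≤ z := by rwa [abs_sub_comm]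
    linarith
  have h2 : |x - q.1| ≤ |x - p.1| + z := by
    have := abs_sub_le x p.1 q.1
    linarith
  have hdp : dpt x p = |x - p.1| + p.2 := by rw [dpt, abs_of_pos hp]
  have hdq : dpt x q = |x - q.1| + q.2 := by rw [dpt, abs_of_pos hq]
  have hdqpos : 0 < dpt x q := by rw [hdq]; linarith
  have hqz : 0 < q.2 + z := by linarith
  constructor
  · rw [le_div_iff₀ hdqpos, hdp, hdq]
    have hm1 : min 1 (p.2 / (q.2 + z)) ≤ 1 := min_le_left _ _
    have hm2 : min 1 (p.2 / (q.2 + z)) * (q.2 + z) ≤ p.2 := by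
      have : min 1 (p.2 / (q.2 + z)) ≤ p.2 / (q.2 + z) := min_le_right _ _
      calc min 1 (p.2 / (q.2 + z)) * (q.2 + z) ≤ (p.2 / (q.2 + z)) * (q.2 + z) := by
            apply mul_le_mul_of_nonneg_right this (le_of_lt hqz)
        _ = p.2 := by field_simp
    have hm0 : 0 ≤ min 1 (p.2 / (q.2 + z)) := le_min zero_le_one (by positivity)
    nlinarith
  · rw [div_le_iff₀ hdqpos, hdp, hdq]
    have hM1 : (1:ℝ) ≤ max 1 ((p.2 + z) / q.2) := le_max_left _ _
    have hM2 : p.2 + z ≤ max 1 ((p.2 + z) / q.2) * q.2 := by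
      have : (p.2 + z) / q.2 ≤ max 1 ((p.2 + z) / q.2) := le_max_right _ _
      calc p.2 + z = ((p.2 + z) / q.2) * q.2 := by field_simp
        _ ≤ max 1 ((p.2 + z) / q.2) * q.2 := mul_le_mul_of_nonneg_right this (le_of_lt hq)
    nlinarith
end

section
/- Let I be a closed interval and u, v : I → ℝ be continuous on I and differentiable on the interior of I. Assume |u′(x)| ≤ κ₁ for all interior x, and |v′(x)| ≤ κ₂ for all interior x with u(x) ≥ v(x). Then x ↦ min(u(x), v(x)) is max(κ₁, κ₂)-Lipschitz on I. -/
open Set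

lemma lip_aux (f f' : ℝ → ℝ) {s t : ℝ} (κ : ℝ) (hst : s ≤ t)
    (hc : ContinuousOn f (Icc s t))
    (hd : ∀ x ∈ Ioo s t, HasDerivAt f (f' x) x)
    (hb : ∀ x ∈ Ioo s t, |f' x| ≤ κ) :
    |f t - f s| ≤ κ * (t - s) := by
  rcases eq_or_lt_of_le hst with h | h
  · simp [h]
  · obtain ⟨c, hcmem, hceq⟩ := exists_hasDerivAt_eq_slope f f' h hc hd
    have hb' := hb c hcmem
    rw [hceq, abs_div, abs_of_pos (by linarith : (0:ℝ) < t - s),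
      div_le_iff₀ (by linarith : (0:ℝ) < t - s)] at hb'
    exact hb'

theorem stmt16 (a b : ℝ) (u v u' v' : ℝ → ℝ) (κ1 κ2 : ℝ)
    (hu : ContinuousOn u (Set.Icc a b)) (hv : ContinuousOn v (Set.Icc a b))
    (hud : ∀ x ∈ Set.Ioo a b, HasDerivAt u (u' x) x)
    (hvd : ∀ x ∈ Set.Ioo a b, HasDerivAt v (v' x) x)
    (hb1 : ∀ x ∈ Set.Ioo a b, |u' x| ≤ κ1)
    (hb2 : ∀ x ∈ Set.Ioo a b, v x ≤ u x → |v' x| ≤ κ2) :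
    ∀ x ∈ Set.Icc a b, ∀ y ∈ Set.Icc a b,
      |min (u x) (v x) - min (u y) (v y)| ≤ max κ1 κ2 * |x - y| := by
  set K := max κ1 κ2 with hK
  have hk1K : κ1 ≤ K := le_max_left _ _
  have hk2K : κ2 ≤ K := le_max_right _ _
  -- claim A : forward increment bound
  have hA : ∀ x ∈ Icc a b, ∀ y ∈ Icc a b, x ≤ y →
      min (u y) (v y) - min (u x) (v x) ≤ K * (y - x) := by
    intro x hx y hy hxy
    have hIcc : Icc x y ⊆ Icc a b := Icc_subset_Icc hx.1 hy.2
    have hIoo : Ioo x y ⊆ Ioo a b := Ioo_subset_Ioo hx.1 hy.2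
    by_cases hxcase : u x ≤ v x
    · have hulip : |u y - u x| ≤ κ1 * (y - x) :=
        lip_aux u u' κ1 hxy (hu.mono hIcc) (fun z hz => hud z (hIoo hz))
          (fun z hz => hb1 z (hIoo hz))
      have h1 : min (u y) (v y) ≤ u y := min_le_left _ _
      have h2 : min (u x) (v x) = u x := min_eq_left hxcase
      have h3 : κ1 * (y - x) ≤ K * (y - x) :=
        mul_le_mul_of_nonneg_right hk1K (by linarith)
      have := abs_le.mp hulip
      linarith [this.2]
    · push_neg at hxcase
      set T : Set ℝ := {t | t ∈ Icc x y ∧ u t ≤ v t} with hT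
      have hcl : IsClosed T := by
        have hc : ContinuousOn (fun t => u t - v t) (Icc x y) :=
          ((hu.mono hIcc).sub (hv.mono hIcc))
        have : T = Icc x y ∩ (fun t => u t - v t) ⁻¹' Iic 0 := by
          ext t; simp [hT, sub_nonpos, and_comm]
        rw [this]
        exact hc.preimage_isClosed_of_isClosed isClosed_Icc isClosed_Iic
      by_cases hTne : T.Nonempty
      · have hbd : BddBelow T := ⟨x, fun t ht => ht.1.1⟩
        set c := sInf T with hc
        have hcT : c ∈ T := hcl.csInf_mem hTne hbd
        have hxc : x < c := by
          rcases eq_or_lt_of_le hcT.1.1 with h | h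
          · exact absurd hcT.2 (by rw [← h]; linarith)
          · exact h
        have hcy : c ≤ y := hcT.1.2
        -- v < u on (x, c), so v is κ2-Lipschitz on [x,c]
        have hvlt : ∀ t ∈ Ioo x c, v t ≤ u t := by
          intro t ht
          by_contra hcon
          push_neg at hcon
          have : t ∈ T := ⟨⟨le_of_lt ht.1, le_trans (le_of_lt ht.2) hcy⟩, le_of_lt hcon⟩
          exact absurd this (notMem_of_lt_csInf ht.2 hbd)
        have hIooxc : Ioo x c ⊆ Ioo a b :=
          Ioo_subset_Ioo hx.1 (le_trans hcy hy.2)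
        have hvlip : |v c - v x| ≤ κ2 * (c - x) :=
          lip_aux v v' κ2 (le_of_lt hxc)
            (hv.mono (Icc_subset_Icc hx.1 (le_trans hcy hy.2)))
            (fun z hz => hvd z (hIooxc hz))
            (fun z hz => hb2 z (hIooxc hz) (hvlt z hz))
        have hIoocy : Ioo c y ⊆ Ioo a b :=
          Ioo_subset_Ioo (le_trans hx.1 (le_of_lt hxc)) hy.2
        have hulip : |u y - u c| ≤ κ1 * (y - c) :=
          lip_aux u u' κ1 hcy
            (hu.mono (Icc_subset_Icc (le_trans hx.1 (le_of_lt hxc)) hy.2))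
            (fun z hz => hud z (hIoocy hz))
            (fun z hz => hb1 z (hIoocy hz))
        have hgc : min (u c) (v c) = u c := min_eq_left hcT.2
        have hgx : min (u x) (v x) = v x := min_eq_right (le_of_lt hxcase)
        have h1 : min (u y) (v y) ≤ u y := min_le_left _ _
        have h2 : u c ≤ v c := hcT.2
        have h3 : κ1 * (y - c) ≤ K * (y - c) :=
          mul_le_mul_of_nonneg_right hk1K (by linarith)
        have h4 : κ2 * (c - x) ≤ K * (c - x) :=
          mul_le_mul_of_nonneg_right hk2K (by linarith)
        have e1 := (abs_le.mp hvlip).2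
        have e2 := (abs_le.mp hulip).2
        nlinarith [h1, h2, e1, e2, h3, h4]
      · -- v < u everywhere on [x,y]
        have hvu : ∀ t ∈ Icc x y, v t ≤ u t := by
          intro t ht
          by_contra hcon
          push_neg at hcon
          exact hTne ⟨t, ht, le_of_lt hcon⟩
        have hvlip : |v y - v x| ≤ κ2 * (y - x) :=
          lip_aux v v' κ2 hxy (hv.mono hIcc)
            (fun z hz => hvd z (hIoo hz))
            (fun z hz => hb2 z (hIoo hz) (hvu z (Ioo_subset_Icc_self hz)))
        have hgx : min (u x) (v x) = v x :=
          min_eq_right (hvu x ⟨le_refl x, hxy⟩)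
        have hgy : min (u y) (v y) ≤ v y := min_le_right _ _
        have h4 : κ2 * (y - x) ≤ K * (y - x) :=
          mul_le_mul_of_nonneg_right hk2K (by linarith)
        have := (abs_le.mp hvlip).2
        linarith
  -- claim B : backward increment bound
  have hB : ∀ x ∈ Icc a b, ∀ y ∈ Icc a b, x ≤ y →
      min (u x) (v x) - min (u y) (v y) ≤ K * (y - x) := by
    intro x hx y hy hxy
    have hIcc : Icc x y ⊆ Icc a b := Icc_subset_Icc hx.1 hy.2
    have hIoo : Ioo x y ⊆ Ioo a b := Ioo_subset_Ioo hx.1 hy.2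
    by_cases hycase : u y ≤ v y
    · have hulip : |u y - u x| ≤ κ1 * (y - x) :=
        lip_aux u u' κ1 hxy (hu.mono hIcc) (fun z hz => hud z (hIoo hz))
          (fun z hz => hb1 z (hIoo hz))
      have h1 : min (u x) (v x) ≤ u x := min_le_left _ _
      have h2 : min (u y) (v y) = u y := min_eq_left hycase
      have h3 : κ1 * (y - x) ≤ K * (y - x) :=
        mul_le_mul_of_nonneg_right hk1K (by linarith)
      have := abs_le.mp hulip
      linarith [this.1]
    · push_neg at hycase
      set T : Set ℝ := {t | t ∈ Icc x y ∧ u t ≤ v t} with hT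
      have hcl : IsClosed T := by
        have hc : ContinuousOn (fun t => u t - v t) (Icc x y) :=
          ((hu.mono hIcc).sub (hv.mono hIcc))
        have : T = Icc x y ∩ (fun t => u t - v t) ⁻¹' Iic 0 := by
          ext t; simp [hT, sub_nonpos, and_comm]
        rw [this]
        exact hc.preimage_isClosed_of_isClosed isClosed_Icc isClosed_Iic
      by_cases hTne : T.Nonempty
      · have hbd : BddAbove T := ⟨y, fun t ht => ht.1.2⟩
        set c := sSup T with hc
        have hcT : c ∈ T := hcl.csSup_mem hTne hbd
        have hcy : c < y := by
          rcases eq_or_lt_of_le hcT.1.2 with h | h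
          · exact absurd hcT.2 (by rw [h]; linarith)
          · exact h
        have hxc : x ≤ c := hcT.1.1
        have hvlt : ∀ t ∈ Ioo c y, v t ≤ u t := by
          intro t ht
          by_contra hcon
          push_neg at hcon
          have : t ∈ T := ⟨⟨le_trans hxc (le_of_lt ht.1), le_of_lt ht.2⟩, le_of_lt hcon⟩
          exact absurd this (notMem_of_csSup_lt ht.1 hbd)
        have hIoocy : Ioo c y ⊆ Ioo a b :=
          Ioo_subset_Ioo (le_trans hx.1 hxc) hy.2
        have hvlip : |v y - v c| ≤ κ2 * (y - c) :=
          lip_aux v v' κ2 (le_of_lt hcy)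
            (hv.mono (Icc_subset_Icc (le_trans hx.1 hxc) hy.2))
            (fun z hz => hvd z (hIoocy hz))
            (fun z hz => hb2 z (hIoocy hz) (hvlt z hz))
        have hIooxc : Ioo x c ⊆ Ioo a b :=
          Ioo_subset_Ioo hx.1 (le_trans (le_of_lt hcy) hy.2)
        have hulip : |u c - u x| ≤ κ1 * (c - x) :=
          lip_aux u u' κ1 hxc
            (hu.mono (Icc_subset_Icc hx.1 (le_trans (le_of_lt hcy) hy.2)))
            (fun z hz => hud z (hIooxc hz))
            (fun z hz => hb1 z (hIooxc hz))
        have hgc : min (u c) (v c) = u c := min_eq_left hcT.2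
        have hgy : min (u y) (v y) = v y := min_eq_right (le_of_lt hycase)
        have h1 : min (u x) (v x) ≤ u x := min_le_left _ _
        have h2 : u c ≤ v c := hcT.2
        have h3 : κ1 * (c - x) ≤ K * (c - x) :=
          mul_le_mul_of_nonneg_right hk1K (by linarith)
        have h4 : κ2 * (y - c) ≤ K * (y - c) :=
          mul_le_mul_of_nonneg_right hk2K (by linarith)
        have e1 := (abs_le.mp hvlip).1
        have e2 := (abs_le.mp hulip).1
        nlinarith [h1, h2, e1, e2, h3, h4]
      · have hvu : ∀ t ∈ Icc x y, v t ≤ u t := by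
          intro t ht
          by_contra hcon
          push_neg at hcon
          exact hTne ⟨t, ht, le_of_lt hcon⟩
        have hvlip : |v y - v x| ≤ κ2 * (y - x) :=
          lip_aux v v' κ2 hxy (hv.mono hIcc)
            (fun z hz => hvd z (hIoo hz))
            (fun z hz => hb2 z (hIoo hz) (hvu z (Ioo_subset_Icc_self hz)))
        have hgy : min (u y) (v y) = v y :=
          min_eq_right (hvu y ⟨hxy, le_refl y⟩)
        have hgx : min (u x) (v x) ≤ v x := min_le_right _ _
        have h4 : κ2 * (y - x) ≤ K * (y - x) :=
          mul_le_mul_of_nonneg_right hk2K (by linarith)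
        have := (abs_le.mp hvlip).1
        linarith
  intro x hx y hy
  rcases le_total x y with h | h
  · have habs : |x - y| = y - x := by
      rw [abs_sub_comm]; exact abs_of_nonneg (by linarith)
    rw [habs, abs_sub_le_iff]
    exact ⟨hB x hx y hy h, hA x hx y hy h⟩
  · have habs : |x - y| = x - y := abs_of_nonneg (by linarith)
    rw [habs, abs_sub_le_iff]
    exact ⟨hA y hy x hx h, hB y hy x hx h⟩
end

section
/- Let π and π* be distinct n-profiles (nondecreasing vectors). Then there exists an index i ∈ [n] such that πᵢ ≠ πᵢ*, and replacing πᵢ by πᵢ* keeps the vector nondecreasing (i.e., πᵢ* ∈ [π_{i−1}, π_{i+1}], with the conventions π₀ = −∞ and π_{n+1} = +∞). -/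
private lemma update_mono {n : ℕ} (π : Fin n → ℝ) (hπ : Monotone π) (i : Fin n) (c : ℝ)
    (h1 : ∀ j, j < i → π j ≤ c) (h2 : ∀ j, i < j → c ≤ π j) :
    Monotone (Function.update π i c) := by
  intro a b hab
  rcases eq_or_ne a i with rfl | ha
  · rcases eq_or_ne b a with rfl | hb
    · exact le_refl _
    · rw [Function.update_self, Function.update_of_ne hb]
      exact h2 b (lt_of_le_of_ne hab (Ne.symm hb))
  · rw [Function.update_of_ne ha]
    rcases eq_or_ne b i with rfl | hb
    · rw [Function.update_self]
      exact h1 a (lt_of_le_of_ne hab ha)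
    · rw [Function.update_of_ne hb]
      exact hπ hab

theorem stmt17 {n : ℕ} (π π' : Fin n → ℝ) (hπ : Monotone π) (hπ' : Monotone π')
    (hne : π ≠ π') :
    ∃ i : Fin n, π i ≠ π' i ∧ Monotone (Function.update π i (π' i)) := by
  by_cases h : ∃ i, π' i < π i
  · obtain ⟨i0, hi0⟩ := h
    set s : Finset (Fin n) := Finset.univ.filter (fun i => π' i < π i) with hs
    have hsne : s.Nonempty := ⟨i0, by simp [hs, hi0]⟩
    set m := s.min' hsne with hm
    have hms : m ∈ s := s.min'_mem hsne
    have hmlt : π' m < π m := by simpa [hs] using hms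
    refine ⟨m, (ne_of_gt hmlt), update_mono π hπ m (π' m) ?_ ?_⟩
    · intro j hj
      have hjs : j ∉ s := fun hjs => absurd (s.min'_le j hjs) (not_le.mpr hj)
      have hle : ¬ (π' j < π j) := by simpa [hs] using hjs
      exact le_trans (not_lt.mp hle) (hπ' hj.le)
    · intro j hj
      exact hmlt.le.trans (hπ hj.le)
  · push_neg at h
    have hne' : ∃ i, π i ≠ π' i := by
      by_contra hc
      push_neg at hc
      exact hne (funext hc)
    obtain ⟨i0, hi0⟩ := hne'
    set s : Finset (Fin n) := Finset.univ.filter (fun i => π i ≠ π' i) with hs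
    have hsne : s.Nonempty := ⟨i0, by simp [hs, hi0]⟩
    set k := s.max' hsne with hk
    have hks : k ∈ s := s.max'_mem hsne
    have hkne : π k ≠ π' k := by simpa [hs] using hks
    have hklt : π k < π' k := lt_of_le_of_ne (h k) hkne
    refine ⟨k, hkne, update_mono π hπ k (π' k) ?_ ?_⟩
    · intro j hj
      exact (hπ hj.le).trans hklt.le
    · intro j hj
      have hjs : j ∉ s := fun hjs => absurd (s.le_max' j hjs) (not_le.mpr hj)
      have heq : π j = π' j := by simpa [hs] using hjs
      rw [heq]
      exact hπ' hj.le
end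

section
/- The mechanism M₁ that outputs the lexicographically first optimal 1-D two-facility solution is not λ-strategyproof for any constant λ: for every λ > 0 there exist a 4-profile π, an agent i, and a misreport x such that d(πᵢ, M₁(π)) ≥ λ·d(πᵢ, M₁(π′)) where π′ is π with component i replaced by x (re-sorted). Concretely, for z > 2ελ and π = (−z, 0, 0, z+ε), agent 1 misreporting −z−2ε reduces its service distance from z to 2ε. -/
lemma tri (x y c : ℝ) (h : x - y = c) : c ≤ |x| + |y| := by
  calc c ≤ |c| := le_abs_self c
  _ = |x - y| := by rw [h]
  _ ≤ |x| + |y| := abs_sub x y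

lemma cost1_four (p0 p1 p2 p3 a b : ℝ) :
    cost1 ![p0,p1,p2,p3] a b =
      min |p0-a| |p0-b| + min |p1-a| |p1-b| + min |p2-a| |p2-b| + min |p3-a| |p3-b| := by
  simp [cost1, Fin.sum_univ_four]

lemma cost_pi (z a b : ℝ) :
    cost1 ![-z,0,0,z+1] a b =
      min |-z - a| |-z - b| + 2 * min |0 - a| |0 - b| + min |z + 1 - a| |z + 1 - b| := by
  rw [cost1_four]; ring

lemma cost_pi' (z a b : ℝ) :
    cost1 ![-(z+2),0,0,z+1] a b =
      min |-(z+2) - a| |-(z+2) - b| + 2 * min |0 - a| |0 - b| + min |z + 1 - a| |z + 1 - b| := by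
  rw [cost1_four]; ring

lemma key1 (z a b : ℝ) (hz : 1 ≤ z) (hab : a ≤ b) :
    z ≤ min |-z - a| |-z - b| + 2 * min |0 - a| |0 - b| + min |z + 1 - a| |z + 1 - b| ∧
    (min |-z - a| |-z - b| + 2 * min |0 - a| |0 - b| + min |z + 1 - a| |z + 1 - b| ≤ z →
      a = 0 ∧ b = z + 1) := by
  have t1 := tri (0 - a) (-z - a) z (by ring)
  have t2 := tri (0 - b) (-z - b) z (by ring)
  have t3 := tri (z + 1 - a) (0 - a) (z + 1) (by ring)
  have t4 := tri (z + 1 - b) (0 - b) (z + 1) (by ring)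
  have t5 := tri (z + 1 - a) (-z - a) (2*z + 1) (by ring)
  have t6 := tri (z + 1 - b) (-z - b) (2*z + 1) (by ring)
  have t7 := tri (z + 1 - a) (-z - b) (2*z + 1 + (b - a)) (by ring)
  have n1 : -(-z - a) ≤ |-z - a| := neg_le_abs _
  have n1' : -z - a ≤ |-z - a| := le_abs_self _
  have n2 : -(-z - b) ≤ |-z - b| := neg_le_abs _
  have n2' : -z - b ≤ |-z - b| := le_abs_self _
  have n3 : -(0 - a) ≤ |0 - a| := neg_le_abs _
  have n3' : 0 - a ≤ |0 - a| := le_abs_self _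
  have n4 : -(0 - b) ≤ |0 - b| := neg_le_abs _
  have n4' : 0 - b ≤ |0 - b| := le_abs_self _
  have n5 : -(z + 1 - a) ≤ |z + 1 - a| := neg_le_abs _
  have n5' : z + 1 - a ≤ |z + 1 - a| := le_abs_self _
  have n6 : -(z + 1 - b) ≤ |z + 1 - b| := neg_le_abs _
  have n6' : z + 1 - b ≤ |z + 1 - b| := le_abs_self _
  simp only [min_def]
  split_ifs <;>
    exact ⟨by linarith, fun h => ⟨by linarith, by linarith⟩⟩

lemma key2 (z a b : ℝ) (hz : 1 ≤ z) (hab : a ≤ b) :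
    z + 1 ≤ min |-(z+2) - a| |-(z+2) - b| + 2 * min |0 - a| |0 - b| + min |z + 1 - a| |z + 1 - b| ∧
    (min |-(z+2) - a| |-(z+2) - b| + 2 * min |0 - a| |0 - b| + min |z + 1 - a| |z + 1 - b| ≤ z + 1 →
      a = -(z+2) ∧ b = 0) := by
  have t1 := tri (0 - a) (-(z+2) - a) (z+2) (by ring)
  have t2 := tri (0 - b) (-(z+2) - b) (z+2) (by ring)
  have t3 := tri (z + 1 - a) (0 - a) (z + 1) (by ring)
  have t4 := tri (z + 1 - b) (0 - b) (z + 1) (by ring)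
  have t5 := tri (z + 1 - a) (-(z+2) - a) (2*z + 3) (by ring)
  have t6 := tri (z + 1 - b) (-(z+2) - b) (2*z + 3) (by ring)
  have t7 := tri (z + 1 - a) (-(z+2) - b) (2*z + 3 + (b - a)) (by ring)
  have n1 : -(-(z+2) - a) ≤ |-(z+2) - a| := neg_le_abs _
  have n1' : -(z+2) - a ≤ |-(z+2) - a| := le_abs_self _
  have n2 : -(-(z+2) - b) ≤ |-(z+2) - b| := neg_le_abs _
  have n2' : -(z+2) - b ≤ |-(z+2) - b| := le_abs_self _
  have n3 : -(0 - a) ≤ |0 - a| := neg_le_abs _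
  have n3' : 0 - a ≤ |0 - a| := le_abs_self _
  have n4 : -(0 - b) ≤ |0 - b| := neg_le_abs _
  have n4' : 0 - b ≤ |0 - b| := le_abs_self _
  have n5 : -(z + 1 - a) ≤ |z + 1 - a| := neg_le_abs _
  have n5' : z + 1 - a ≤ |z + 1 - a| := le_abs_self _
  have n6 : -(z + 1 - b) ≤ |z + 1 - b| := neg_le_abs _
  have n6' : z + 1 - b ≤ |z + 1 - b| := le_abs_self _
  simp only [min_def]
  split_ifs <;>
    exact ⟨by linarith, fun h => ⟨by linarith, by linarith⟩⟩

theorem stmt19 (lam : ℝ) (hlam : 0 < lam) :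
    ∃ (π π' : Fin 4 → ℝ), Monotone π ∧ Monotone π' ∧
      ∃ (i : Fin 4) (x : ℝ),
        (∃ e : Equiv.Perm (Fin 4), π' = Function.update π i x ∘ e) ∧
        ∀ σ σ' : ℝ × ℝ, LexOpt π σ → LexOpt π' σ' →
          min |π i - σ.1| |π i - σ.2| ≥ lam * min |π i - σ'.1| |π i - σ'.2| := by
  set z : ℝ := 2*lam + 2 with hzdef
  have hz1 : (1:ℝ) ≤ z := by rw [hzdef]; linarith
  refine ⟨![-z,0,0,z+1], ![-(z+2),0,0,z+1], ?_, ?_, 0, -(z+2), ⟨Equiv.refl _, ?_⟩, ?_⟩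
  · intro i j hij
    fin_cases i <;> fin_cases j <;> simp_all <;> linarith
  · intro i j hij
    fin_cases i <;> fin_cases j <;> simp_all <;> linarith
  · funext i
    fin_cases i <;> simp [Function.update]
  · intro σ σ' hσ hσ'
    -- pin down σ
    have hcost : cost1 ![-z,0,0,z+1] 0 (z+1) = z := by
      rw [cost_pi]
      have e1 : min |-z - (0:ℝ)| |-z - (z+1)| = z := by
        rw [show -z - (0:ℝ) = -z by ring, show -z - (z+1) = -(2*z+1) by ring, abs_neg, abs_neg,
          abs_of_nonneg (by linarith : (0:ℝ) ≤ z), abs_of_nonneg (by linarith : (0:ℝ) ≤ 2*z+1)]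
        exact min_eq_left (by linarith)
      have e2 : min |(0:ℝ) - 0| |(0:ℝ) - (z+1)| = 0 := by
        rw [show (0:ℝ) - 0 = 0 by ring, abs_zero]
        exact min_eq_left (abs_nonneg _)
      have e3 : min |z + 1 - (0:ℝ)| |z + 1 - (z+1)| = 0 := by
        rw [show z + 1 - (z+1) = (0:ℝ) by ring, abs_zero]
        exact min_eq_right (abs_nonneg _)
      rw [e1, e2, e3]; ring
    have hb1 : cost1 ![-z,0,0,z+1] σ.1 σ.2 ≤ z := by
      have := hσ.2.1 0 (z+1) (by linarith)
      rw [hcost] at this; exact this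
    rw [cost_pi] at hb1
    obtain ⟨hs1, hs2⟩ := (key1 z σ.1 σ.2 hz1 hσ.1).2 hb1
    -- pin down σ'
    have hcost' : cost1 ![-(z+2),0,0,z+1] (-(z+2)) 0 = z + 1 := by
      rw [cost_pi']
      have e1 : min |-(z+2) - (-(z+2))| |-(z+2) - (0:ℝ)| = 0 := by
        rw [show -(z+2) - (-(z+2)) = (0:ℝ) by ring, abs_zero]
        exact min_eq_left (abs_nonneg _)
      have e2 : min |(0:ℝ) - (-(z+2))| |(0:ℝ) - 0| = 0 := by
        rw [show (0:ℝ) - 0 = 0 by ring, abs_zero]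
        exact min_eq_right (abs_nonneg _)
      have e3 : min |z + 1 - (-(z+2))| |z + 1 - (0:ℝ)| = z + 1 := by
        rw [show z + 1 - (-(z+2)) = 2*z+3 by ring, show z + 1 - (0:ℝ) = z+1 by ring,
          abs_of_nonneg (by linarith : (0:ℝ) ≤ 2*z+3),
          abs_of_nonneg (by linarith : (0:ℝ) ≤ z+1)]
        exact min_eq_right (by linarith)
      rw [e1, e2, e3]; ring
    have hb1' : cost1 ![-(z+2),0,0,z+1] σ'.1 σ'.2 ≤ z + 1 := by
      have := hσ'.2.1 (-(z+2)) 0 (by linarith)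
      rw [hcost'] at this; exact this
    rw [cost_pi'] at hb1'
    obtain ⟨hs1', hs2'⟩ := (key2 z σ'.1 σ'.2 hz1 hσ'.1).2 hb1'
    -- compute the final inequality
    simp only [Matrix.cons_val_zero, hs1, hs2, hs1', hs2']
    have e1 : |-z - (0:ℝ)| = z := by
      rw [show -z - (0:ℝ) = -z by ring, abs_neg, abs_of_nonneg (by linarith : (0:ℝ) ≤ z)]
    have e2 : |-z - (z+1)| = 2*z+1 := by
      rw [show -z - (z+1) = -(2*z+1) by ring, abs_neg,
        abs_of_nonneg (by linarith : (0:ℝ) ≤ 2*z+1)]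
    have e3 : |-z - (-(z+2))| = 2 := by
      rw [show -z - (-(z+2)) = (2:ℝ) by ring, abs_of_nonneg (by norm_num : (0:ℝ) ≤ 2)]
    rw [e1, e2, e3, min_eq_left (by linarith : z ≤ 2*z+1),
      min_eq_left (show (2:ℝ) ≤ z by rw [hzdef]; linarith)]
    rw [hzdef]
    linarith
end
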